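/- Let f : ℝ → ℝ be a continuous probability density function supported in (0,∞) with ∫_0^∞ (1/x) f(x) dx < ∞, let F(q) = ∫_0^q f(x) dx, and for r, s > 0 define a(q) = F(q) + q · ∫_q^∞ (1/x) f(x) dx − r q / s. Then a is concave on the interval (0,∞). -/

import Mathlib

open MeasureTheory Set

/-- The allocation function `a(q) = F(q) + q ∫_q^∞ (1/x) f(x) dx − r q / s` is
concave on the interval `(0,∞)`. -/
theorem allocation_concave
    (f : ℝ → ℝ) (hf_cont : Continuous f) (hf_nonneg : ∀ x, 0 ≤ f x)
    (hf_supp : ∀ x ≤ 0, f x = 0)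
    (hf_int : ∫ x, f x = 1)
    (hmoment : IntegrableOn (fun x => (1 / x) * f x) (Ioi 0))
    (r s : ℝ) (hr : 0 < r) (hs : 0 < s) :
    ConcaveOn ℝ (Ioi 0)
      (fun q : ℝ =>
        (∫ x in (0:ℝ)..q, f x) + q * (∫ x in Ioi q, (1 / x) * f x) - r * q / s) := by
  set g : ℝ → ℝ := fun x => (1 / x) * f x with hg
  have hg_nonneg : ∀ x, 0 ≤ g x := by
    intro x
    rcases le_or_gt x 0 with hx | hx
    · simp [hg, hf_supp x hx]
    · exact mul_nonneg (by positivity) (hf_nonneg x)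
  have hg_contOn : ContinuousOn g (Ioi 0) :=
    (continuousOn_const.div continuousOn_id fun x hx => ne_of_gt hx).mul
      hf_cont.continuousOn
  set G : ℝ → ℝ := fun q => ∫ x in Ioi q, g x with hG
  -- splitting lemma
  have hsplit : ∀ a b : ℝ, 0 < a → a ≤ b →
      G a = (∫ x in Ioc a b, g x) + G b := by
    intro a b ha hab
    have hunion : Ioc a b ∪ Ioi b = Ioi a := Ioc_union_Ioi_eq_Ioi hab
    rw [hG]
    simp only
    rw [← hunion, setIntegral_union (Ioc_disjoint_Ioi le_rfl) measurableSet_Ioi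
      (hmoment.mono_set (Ioc_subset_Ioi_self.trans (Ioi_subset_Ioi ha.le)))
      (hmoment.mono_set (Ioi_subset_Ioi (ha.trans_le hab).le))]
  -- G q = G 1 - ∫ 1..q g  for q > 0
  have hGeq : ∀ q : ℝ, 0 < q → G q = G 1 - ∫ x in (1:ℝ)..q, g x := by
    intro q hq
    rcases le_total 1 q with h | h
    · rw [intervalIntegral.integral_of_le h, hsplit 1 q one_pos h]; ring
    · rw [intervalIntegral.integral_of_ge h, hsplit q 1 hq h]
      ring
  -- G antitone on Ioi 0
  have hG_anti : AntitoneOn G (Ioi 0) := by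
    intro p hp q hq hpq
    exact setIntegral_mono_set (hmoment.mono_set (Ioi_subset_Ioi hp.le))
      (Filter.Eventually.of_forall fun x => hg_nonneg x)
      (HasSubset.Subset.eventuallyLE (Ioi_subset_Ioi hpq))
  -- derivative of the whole thing at q > 0
  have hderiv : ∀ q ∈ Ioi (0:ℝ), HasDerivAt
      (fun q : ℝ => (∫ x in (0:ℝ)..q, f x) + q * G q - r * q / s)
      (G q - r / s) q := by
    intro q hq
    have hq0 : (0:ℝ) < q := hq
    have hF : HasDerivAt (fun q : ℝ => ∫ x in (0:ℝ)..q, f x) (f q) q :=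
      intervalIntegral.integral_hasDerivAt_right
        (hf_cont.intervalIntegrable 0 q)
        (hf_cont.stronglyMeasurableAtFilter _ _)
        hf_cont.continuousAt
    have hg_cont : ContinuousAt g q :=
      ((continuousAt_const.div continuousAt_id hq0.ne').mul hf_cont.continuousAt)
    have hg_meas : StronglyMeasurableAtFilter g (nhds q) :=
      ⟨Ioi 0, Ioi_mem_nhds hq0, hg_contOn.aestronglyMeasurable measurableSet_Ioi⟩
    have hH : HasDerivAt (fun q : ℝ => ∫ x in (1:ℝ)..q, g x) (g q) q := by
      refine intervalIntegral.integral_hasDerivAt_right ?_ hg_meas hg_cont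
      rw [intervalIntegrable_iff]
      refine hmoment.mono_set ?_
      rw [uIoc_eq_union]
      refine union_subset ?_ ?_ <;> exact fun x hx => lt_of_lt_of_le (by positivity) hx.1.le
    have hGq : HasDerivAt G (-(g q)) q := by
      have h1 : HasDerivAt (fun q : ℝ => G 1 - ∫ x in (1:ℝ)..q, g x) (-(g q)) q := by
        exact ((hasDerivAt_const q (G 1)).sub hH).congr_deriv (by simp)
      refine h1.congr_of_eventuallyEq ?_
      filter_upwards [Ioi_mem_nhds hq0] with x hx
      exact hGeq x hx
    have hqg : q * g q = f q := by
      simp only [hg]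
      field_simp
    have hlin : HasDerivAt (fun q : ℝ => r * q / s) (r * 1 / s) q :=
      ((hasDerivAt_id' q).const_mul r).div_const s
    have h := (hF.add ((hasDerivAt_id' q).mul hGq)).sub hlin
    refine h.congr_deriv ?_
    have h2 : q * -(g q) = -f q := by rw [mul_neg, hqg]
    rw [h2]; ring
  have hdiff : DifferentiableOn ℝ
      (fun q : ℝ => (∫ x in (0:ℝ)..q, f x) + q * G q - r * q / s) (Ioi 0) :=
    fun q hq => ((hderiv q hq).differentiableAt).differentiableWithinAt
  have hcont : ContinuousOn
      (fun q : ℝ => (∫ x in (0:ℝ)..q, f x) + q * G q - r * q / s) (Ioi 0) :=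
    hdiff.continuousOn
  have hanti : AntitoneOn
      (deriv (fun q : ℝ => (∫ x in (0:ℝ)..q, f x) + q * G q - r * q / s)) (Ioi 0) := by
    intro p hp q hq hpq
    rw [(hderiv p hp).deriv, (hderiv q hq).deriv]
    exact sub_le_sub_right (hG_anti hp hq hpq) _
  have := AntitoneOn.concaveOn_of_deriv (convex_Ioi 0) hcont
    (by rwa [interior_Ioi]) (by rwa [interior_Ioi])
  exact this
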